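/- Let Z₄¹ be the 4-dimensional complex Zinbiel algebra with basis (e₁, e₂, e₃, e₄) and nonzero products e₁·e₁ = e₂, e₁·e₂ = e₃, e₂·e₁ = 2e₃, e₁·e₃ = e₄, e₂·e₂ = 3e₄, e₃·e₁ = 3e₄ (all other products of basis elements zero). A linear map d : Z₄¹ → Z₄¹ is a derivation if and only if there exist α, β, γ, δ ∈ ℂ with d(e₁) = α e₁ + β e₂ + γ e₃ + δ e₄, d(e₂) = 2α e₂ + 3β e₃ + 4γ e₄, d(e₃) = 3α e₃ + 6β e₄, and d(e₄) = 4α e₄. In particular, Der(Z₄¹) is 4-dimensional. -/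
import Mathlib


/-- The multiplication of the 4-dimensional complex Zinbiel algebra `Z₄¹`:
`e₁e₁ = e₂`, `e₁e₂ = e₃`, `e₂e₁ = 2e₃`, `e₁e₃ = e₄`, `e₂e₂ = 3e₄`, `e₃e₁ = 3e₄`,
all other products of basis elements zero. -/
def mulZ41 (p q : Fin 4 → ℂ) : Fin 4 → ℂ :=
  ![0, p 0 * q 0, p 0 * q 1 + 2 * (p 1 * q 0),
    p 0 * q 2 + 3 * (p 1 * q 1) + 3 * (p 2 * q 0)]

lemma mulZ41_add_left (a b q : Fin 4 → ℂ) :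
    mulZ41 (a + b) q = mulZ41 a q + mulZ41 b q := by
  funext i; fin_cases i <;> simp [mulZ41] <;> ring

lemma mulZ41_add_right (p a b : Fin 4 → ℂ) :
    mulZ41 p (a + b) = mulZ41 p a + mulZ41 p b := by
  funext i; fin_cases i <;> simp [mulZ41] <;> ring

lemma mulZ41_smul_left (c : ℂ) (a q : Fin 4 → ℂ) :
    mulZ41 (c • a) q = c • mulZ41 a q := by
  funext i; fin_cases i <;> simp [mulZ41] <;> ring

lemma mulZ41_smul_right (c : ℂ) (p a : Fin 4 → ℂ) :
    mulZ41 p (c • a) = c • mulZ41 p a := by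
  funext i; fin_cases i <;> simp [mulZ41] <;> ring

lemma mulZ41_zero_left (q : Fin 4 → ℂ) : mulZ41 0 q = 0 := by
  funext i; fin_cases i <;> simp [mulZ41]

lemma mulZ41_zero_right (p : Fin 4 → ℂ) : mulZ41 p 0 = 0 := by
  funext i; fin_cases i <;> simp [mulZ41]

lemma apply_formula (d : Module.End ℂ (Fin 4 → ℂ)) (p : Fin 4 → ℂ) :
    d p = p 0 • d ![1, 0, 0, 0] + p 1 • d ![0, 1, 0, 0] +
      p 2 • d ![0, 0, 1, 0] + p 3 • d ![0, 0, 0, 1] := by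
  have hp : p = p 0 • ![(1:ℂ), 0, 0, 0] + p 1 • ![0, 1, 0, 0] +
      p 2 • ![0, 0, 1, 0] + p 3 • ![0, 0, 0, 1] := by
    funext i; fin_cases i <;> simp
  conv_lhs => rw [hp]
  simp only [map_add, map_smul]

set_option maxHeartbeats 1600000 in
lemma isDer_iff (d : Module.End ℂ (Fin 4 → ℂ)) :
    (∀ p q : Fin 4 → ℂ, d (mulZ41 p q) = mulZ41 (d p) q + mulZ41 p (d q)) ↔
      ∃ α β γ δ : ℂ,
        d ![1, 0, 0, 0] =
          α • ![1, 0, 0, 0] + β • ![0, 1, 0, 0] + γ • ![0, 0, 1, 0] + δ • ![0, 0, 0, 1] ∧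
        d ![0, 1, 0, 0] =
          (2 * α) • ![0, 1, 0, 0] + (3 * β) • ![0, 0, 1, 0] + (4 * γ) • ![0, 0, 0, 1] ∧
        d ![0, 0, 1, 0] = (3 * α) • ![0, 0, 1, 0] + (6 * β) • ![0, 0, 0, 1] ∧
        d ![0, 0, 0, 1] = (4 * α) • ![0, 0, 0, 1] := by
  constructor
  · intro h
    refine ⟨d ![1,0,0,0] 0, d ![1,0,0,0] 1, d ![1,0,0,0] 2, d ![1,0,0,0] 3, ?_, ?_, ?_, ?_⟩
    · funext i; fin_cases i <;> simp
    · have h11 := h ![1,0,0,0] ![1,0,0,0]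
      have e2 : mulZ41 ![(1:ℂ),0,0,0] ![1,0,0,0] = ![0,1,0,0] := by
        funext i; fin_cases i <;> simp [mulZ41]
      rw [e2] at h11
      rw [h11]; funext i; fin_cases i <;> simp [mulZ41] <;> ring
    · have h11 := h ![1,0,0,0] ![1,0,0,0]
      have e2 : mulZ41 ![(1:ℂ),0,0,0] ![1,0,0,0] = ![0,1,0,0] := by
        funext i; fin_cases i <;> simp [mulZ41]
      rw [e2] at h11
      have h12 := h ![1,0,0,0] ![0,1,0,0]
      have e3 : mulZ41 ![(1:ℂ),0,0,0] ![0,1,0,0] = ![0,0,1,0] := by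
        funext i; fin_cases i <;> simp [mulZ41]
      rw [e3, h11] at h12
      rw [h12]; funext i; fin_cases i <;> simp [mulZ41] <;> ring
    · have h11 := h ![1,0,0,0] ![1,0,0,0]
      have e2 : mulZ41 ![(1:ℂ),0,0,0] ![1,0,0,0] = ![0,1,0,0] := by
        funext i; fin_cases i <;> simp [mulZ41]
      rw [e2] at h11
      have h12 := h ![1,0,0,0] ![0,1,0,0]
      have e3 : mulZ41 ![(1:ℂ),0,0,0] ![0,1,0,0] = ![0,0,1,0] := by
        funext i; fin_cases i <;> simp [mulZ41]
      rw [e3, h11] at h12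
      have h13 := h ![1,0,0,0] ![0,0,1,0]
      have e4 : mulZ41 ![(1:ℂ),0,0,0] ![0,0,1,0] = ![0,0,0,1] := by
        funext i; fin_cases i <;> simp [mulZ41]
      rw [e4, h12] at h13
      rw [h13]; funext i; fin_cases i <;> simp [mulZ41] <;> ring
  · rintro ⟨α, β, γ, δ, h1, h2, h3, h4⟩ p q
    rw [apply_formula d (mulZ41 p q), apply_formula d p, apply_formula d q,
      h1, h2, h3, h4]
    funext i; fin_cases i <;> simp [mulZ41] <;> ring

/-- The submodule of derivations of `Z₄¹`. -/
noncomputable def derS : Submodule ℂ (Module.End ℂ (Fin 4 → ℂ)) where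
  carrier := {d | ∀ p q : Fin 4 → ℂ, d (mulZ41 p q) = mulZ41 (d p) q + mulZ41 p (d q)}
  zero_mem' := by
    intro p q
    simp [mulZ41_zero_left, mulZ41_zero_right]
  add_mem' := by
    intro a b ha hb p q
    simp only [LinearMap.add_apply, ha p q, hb p q, mulZ41_add_left, mulZ41_add_right]
    abel
  smul_mem' := by
    intro c a ha p q
    simp only [LinearMap.smul_apply, ha p q, mulZ41_smul_left, mulZ41_smul_right, smul_add]

/-- The map sending `v` to the derivation with `d(e₁) = v`. -/
noncomputable def Dmap : (Fin 4 → ℂ) →ₗ[ℂ] Module.End ℂ (Fin 4 → ℂ) where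
  toFun v :=
    { toFun := fun p => ![v 0 * p 0, v 1 * p 0 + 2 * v 0 * p 1,
        v 2 * p 0 + 3 * v 1 * p 1 + 3 * v 0 * p 2,
        v 3 * p 0 + 4 * v 2 * p 1 + 6 * v 1 * p 2 + 4 * v 0 * p 3]
      map_add' := by intro a b; funext i; fin_cases i <;> simp <;> ring
      map_smul' := by intro c a; funext i; fin_cases i <;> simp <;> ring }
  map_add' := by
    intro v w; ext p i; fin_cases i <;> simp <;> ring
  map_smul' := by
    intro c v; ext p i; fin_cases i <;> simp <;> ring

lemma Dmap_apply (v p : Fin 4 → ℂ) :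
    Dmap v p = ![v 0 * p 0, v 1 * p 0 + 2 * v 0 * p 1,
      v 2 * p 0 + 3 * v 1 * p 1 + 3 * v 0 * p 2,
      v 3 * p 0 + 4 * v 2 * p 1 + 6 * v 1 * p 2 + 4 * v 0 * p 3] := rfl

lemma Dmap_e1 (v : Fin 4 → ℂ) : Dmap v ![1, 0, 0, 0] = v := by
  funext i; fin_cases i <;> simp [Dmap_apply]

lemma Dmap_mem (v : Fin 4 → ℂ) : Dmap v ∈ derS := by
  show ∀ p q : Fin 4 → ℂ, _
  exact (isDer_iff (Dmap v)).mpr ⟨v 0, v 1, v 2, v 3,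
    by funext i; fin_cases i <;> simp [Dmap_apply] <;> ring,
    by funext i; fin_cases i <;> simp [Dmap_apply] <;> ring,
    by funext i; fin_cases i <;> simp [Dmap_apply] <;> ring,
    by funext i; fin_cases i <;> simp [Dmap_apply] <;> ring⟩

lemma derS_eq_range : derS = LinearMap.range Dmap := by
  ext d
  constructor
  · intro hd
    obtain ⟨α, β, γ, δ, h1, h2, h3, h4⟩ := (isDer_iff d).mp hd
    refine ⟨![α, β, γ, δ], ?_⟩
    apply LinearMap.ext
    intro p
    rw [apply_formula d p, h1, h2, h3, h4]
    funext i; fin_cases i <;> simp [Dmap_apply] <;> ring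
  · rintro ⟨v, rfl⟩
    exact Dmap_mem v

lemma Dmap_injective : Function.Injective Dmap := by
  intro v w h
  rw [← Dmap_e1 v, ← Dmap_e1 w, h]

/-- A linear map `d` on `Z₄¹` is a derivation iff
`d(e₁) = α e₁ + β e₂ + γ e₃ + δ e₄`, `d(e₂) = 2α e₂ + 3β e₃ + 4γ e₄`,
`d(e₃) = 3α e₃ + 6β e₄`, `d(e₄) = 4α e₄` for some `α, β, γ, δ ∈ ℂ`;
in particular `Der(Z₄¹)` is 4-dimensional. -/
theorem derivations_Z41 :
    (∀ d : Module.End ℂ (Fin 4 → ℂ),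
      (∀ p q : Fin 4 → ℂ, d (mulZ41 p q) = mulZ41 (d p) q + mulZ41 p (d q)) ↔
      ∃ α β γ δ : ℂ,
        d ![1, 0, 0, 0] =
          α • ![1, 0, 0, 0] + β • ![0, 1, 0, 0] + γ • ![0, 0, 1, 0] + δ • ![0, 0, 0, 1] ∧
        d ![0, 1, 0, 0] =
          (2 * α) • ![0, 1, 0, 0] + (3 * β) • ![0, 0, 1, 0] + (4 * γ) • ![0, 0, 0, 1] ∧
        d ![0, 0, 1, 0] = (3 * α) • ![0, 0, 1, 0] + (6 * β) • ![0, 0, 0, 1] ∧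
        d ![0, 0, 0, 1] = (4 * α) • ![0, 0, 0, 1]) ∧
    ∃ S : Submodule ℂ (Module.End ℂ (Fin 4 → ℂ)),
      (∀ d, d ∈ S ↔ ∀ p q : Fin 4 → ℂ, d (mulZ41 p q) = mulZ41 (d p) q + mulZ41 p (d q)) ∧
      Module.finrank ℂ S = 4 := by
  refine ⟨isDer_iff, derS, fun d => Iff.rfl, ?_⟩
  rw [derS_eq_range, LinearMap.finrank_range_of_inj Dmap_injective]
  simp
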